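/- The normal part of the third-order conformal circle equation is invariant under orientation-preserving reparametrization: if γ̃(σ) = γ(τ(σ)) with τ' > 0, then the component of ∇_{γ̃'}∇_{γ̃'}γ̃' + (terms of equation (1)) orthogonal to γ̃' vanishes if and only if the corresponding orthogonal component vanishes for γ. -/

import Mathlib

open scoped RealInnerProductSpace

/-- Projection of `w` onto the orthogonal complement of the velocity of `c` at time `t`. -/
noncomputable def perpPart {n : ℕ} (c : ℝ → EuclideanSpace ℝ (Fin n)) (t : ℝ)
    (w : EuclideanSpace ℝ (Fin n)) : EuclideanSpace ℝ (Fin n) :=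
  w - (⟪w, deriv c t⟫ / ⟪deriv c t, deriv c t⟫) • deriv c t

/-- The normal part of the conformal circle equation (flat space, `P = 0`) for `c` at `t`. -/
noncomputable def NormalCCEq {n : ℕ} (c : ℝ → EuclideanSpace ℝ (Fin n)) (t : ℝ) : Prop :=
  perpPart c t (iteratedDeriv 3 c t)
    = (3 * ⟪deriv c t, iteratedDeriv 2 c t⟫ / ⟪deriv c t, deriv c t⟫)
        • perpPart c t (iteratedDeriv 2 c t)

section aux

variable {E : Type*} [NormedAddCommGroup E] [NormedSpace ℝ E]

lemma auxDerivSmooth {f : ℝ → E} (hf : ContDiff ℝ (⊤ : ℕ∞) f) :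
    ContDiff ℝ (⊤ : ℕ∞) (deriv f) := by
  have := (contDiff_infty_iff_deriv.mp (by exact_mod_cast hf)).2
  exact_mod_cast this

lemma auxDiff {f : ℝ → E} (hf : ContDiff ℝ (⊤ : ℕ∞) f) : Differentiable ℝ f :=
  hf.differentiable (by simp)

end aux

/-- The normal part of the third-order conformal circle equation is invariant under
orientation-preserving reparametrization: if `γ̃ = γ ∘ τ` with `τ' > 0`, then the
normal part of the equation holds for `γ̃` at `s` iff it holds for `γ` at `τ(s)`.
(Flat model: `M = ℝⁿ`, `P = 0`.) -/
theorem stmt9 (n : ℕ) (hn : 3 ≤ n)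
    (γ : ℝ → EuclideanSpace ℝ (Fin n)) (hγ : ContDiff ℝ (⊤ : ℕ∞) γ)
    (hreg : ∀ t, deriv γ t ≠ 0)
    (τ : ℝ → ℝ) (hτ : ContDiff ℝ (⊤ : ℕ∞) τ) (hτ' : ∀ s, 0 < deriv τ s) :
    ∀ s : ℝ, NormalCCEq (γ ∘ τ) s ↔ NormalCCEq γ (τ s) := by
  have hγ1 := auxDerivSmooth hγ
  have hγ2 := auxDerivSmooth hγ1
  have hτ1 := auxDerivSmooth hτ
  have hτ2 := auxDerivSmooth hτ1
  have hg2 : iteratedDeriv 2 γ = deriv (deriv γ) := by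
    simp [iteratedDeriv_succ, iteratedDeriv_one]
  have hg3 : iteratedDeriv 3 γ = deriv (deriv (deriv γ)) := by
    simp [iteratedDeriv_succ, iteratedDeriv_one]
  -- first derivative of the composition
  have Hd1 : ∀ s, HasDerivAt (γ ∘ τ) (deriv τ s • deriv γ (τ s)) s := fun s =>
    ((auxDiff hγ (τ s)).hasDerivAt).scomp s ((auxDiff hτ s).hasDerivAt)
  have D1 : deriv (γ ∘ τ) = fun s => deriv τ s • deriv γ (τ s) :=
    funext fun s => (Hd1 s).deriv
  -- second derivative
  have Hd2 : ∀ s, HasDerivAt (fun s => deriv τ s • deriv γ (τ s))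
      (deriv (deriv τ) s • deriv γ (τ s)
        + deriv τ s • (deriv τ s • deriv (deriv γ) (τ s))) s := fun s =>
    (((auxDiff hτ1 s).hasDerivAt).smul
      (((auxDiff hγ1 (τ s)).hasDerivAt).scomp s
        ((auxDiff hτ s).hasDerivAt))).congr_deriv (by simp only [Function.comp_apply]; module)
  have D2 : deriv (deriv (γ ∘ τ)) = fun s =>
      deriv (deriv τ) s • deriv γ (τ s)
        + deriv τ s • (deriv τ s • deriv (deriv γ) (τ s)) := by
    rw [D1]; exact funext fun s => (Hd2 s).deriv
  have D2' : ∀ s, iteratedDeriv 2 (γ ∘ τ) s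
      = deriv (deriv τ) s • deriv γ (τ s)
        + deriv τ s • (deriv τ s • deriv (deriv γ) (τ s)) := by
    intro s
    rw [show iteratedDeriv 2 (γ ∘ τ) = deriv (deriv (γ ∘ τ)) by
      simp [iteratedDeriv_succ, iteratedDeriv_one], D2]
  -- third derivative
  have Hd3 : ∀ s, HasDerivAt (fun s =>
      deriv (deriv τ) s • deriv γ (τ s)
        + deriv τ s • (deriv τ s • deriv (deriv γ) (τ s)))
      (deriv (deriv (deriv τ)) s • deriv γ (τ s)
        + (3 * (deriv τ s * deriv (deriv τ) s)) • deriv (deriv γ) (τ s)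
        + (deriv τ s ^ 3) • deriv (deriv (deriv γ)) (τ s)) s := by
    intro s
    exact ((((auxDiff hτ2 s).hasDerivAt).smul
        (((auxDiff hγ1 (τ s)).hasDerivAt).scomp s ((auxDiff hτ s).hasDerivAt))).add
      (((auxDiff hτ1 s).hasDerivAt).smul
        (((auxDiff hτ1 s).hasDerivAt).smul
          (((auxDiff hγ2 (τ s)).hasDerivAt).scomp s
            ((auxDiff hτ s).hasDerivAt))))).congr_deriv (by simp only [Function.comp_apply, Pi.smul_apply']; module)
  have D3 : ∀ s, iteratedDeriv 3 (γ ∘ τ) s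
      = deriv (deriv (deriv τ)) s • deriv γ (τ s)
        + (3 * (deriv τ s * deriv (deriv τ) s)) • deriv (deriv γ) (τ s)
        + (deriv τ s ^ 3) • deriv (deriv (deriv γ)) (τ s) := by
    intro s
    have h : iteratedDeriv 3 (γ ∘ τ) = deriv (deriv (deriv (γ ∘ τ))) := by
      simp [iteratedDeriv_succ, iteratedDeriv_one]
    rw [h, D2, (Hd3 s).deriv]
  -- pointwise algebra
  intro s
  set u : ℝ := deriv τ s with hu_def
  set a : ℝ := deriv (deriv τ) s with ha_def
  set b : ℝ := deriv (deriv (deriv τ)) s with hb_def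
  set v := deriv γ (τ s) with hv_def
  set w2 := deriv (deriv γ) (τ s) with hw2_def
  set w3 := deriv (deriv (deriv γ)) (τ s) with hw3_def
  have hu : u ≠ 0 := (hτ' s).ne'
  have hv : v ≠ 0 := hreg (τ s)
  have hvv : ⟪v, v⟫ ≠ 0 := fun h => hv (inner_self_eq_zero.mp h)
  set P : EuclideanSpace ℝ (Fin n) → EuclideanSpace ℝ (Fin n) :=
    fun w => w - (⟪w, v⟫ / ⟪v, v⟫) • v with hP_def
  have hPv : P v = 0 := by
    show v - (⟪v, v⟫ / ⟪v, v⟫) • v = 0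
    rw [div_self hvv, one_smul, sub_self]
  have hPsmul : ∀ (c : ℝ) w, P (c • w) = c • P w := by
    intro c w
    show c • w - (⟪c • w, v⟫ / ⟪v, v⟫) • v = c • (w - (⟪w, v⟫ / ⟪v, v⟫) • v)
    rw [real_inner_smul_left, mul_div_assoc, mul_smul, smul_sub]
  have hPadd : ∀ x y, P (x + y) = P x + P y := by
    intro x y
    show x + y - (⟪x + y, v⟫ / ⟪v, v⟫) • v
      = (x - (⟪x, v⟫ / ⟪v, v⟫) • v) + (y - (⟪y, v⟫ / ⟪v, v⟫) • v)
    rw [inner_add_left, add_div, add_smul]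
    abel
  have hperp : ∀ w, perpPart (γ ∘ τ) s w = P w := by
    intro w
    have hD : deriv (γ ∘ τ) s = u • v := by rw [D1]
    have hs1 : u * ⟪w, v⟫ / (u * (u * ⟪v, v⟫)) * u = ⟪w, v⟫ / ⟪v, v⟫ := by
      generalize ⟪w, v⟫ = A
      generalize hB : ⟪v, v⟫ = B at hvv ⊢
      field_simp
    show w - (⟪w, deriv (γ ∘ τ) s⟫ / ⟪deriv (γ ∘ τ) s, deriv (γ ∘ τ) s⟫) • deriv (γ ∘ τ) s
      = w - (⟪w, v⟫ / ⟪v, v⟫) • v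
    rw [hD, real_inner_smul_right, real_inner_smul_left, real_inner_smul_right,
      smul_smul, hs1]
  have hperpγ : ∀ w, perpPart γ (τ s) w = P w := fun w => rfl
  have e3 : perpPart (γ ∘ τ) s (iteratedDeriv 3 (γ ∘ τ) s)
      = (3 * (u * a)) • P w2 + u ^ 3 • P w3 := by
    rw [hperp, D3 s, hPadd, hPadd, hPsmul, hPsmul, hPsmul, hPv]
    module
  have e2p : perpPart (γ ∘ τ) s (iteratedDeriv 2 (γ ∘ τ) s) = (u ^ 2) • P w2 := by
    rw [hperp, D2' s, hPadd, hPsmul, hPsmul, hPsmul, hPv]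
    module
  have einner : ⟪deriv (γ ∘ τ) s, iteratedDeriv 2 (γ ∘ τ) s⟫
      = u * a * ⟪v, v⟫ + u * (u * u) * ⟪v, w2⟫ := by
    have hD : deriv (γ ∘ τ) s = u • v := by rw [D1]
    rw [hD, D2' s, inner_add_right, real_inner_smul_left, real_inner_smul_left,
      real_inner_smul_right, real_inner_smul_right, real_inner_smul_right]
    ring
  have eself : ⟪deriv (γ ∘ τ) s, deriv (γ ∘ τ) s⟫ = u ^ 2 * ⟪v, v⟫ := by
    have hD : deriv (γ ∘ τ) s = u • v := by rw [D1]
    rw [hD, real_inner_smul_left, real_inner_smul_right]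
    ring
  have ecoeff : (3 * ⟪deriv (γ ∘ τ) s, iteratedDeriv 2 (γ ∘ τ) s⟫
      / ⟪deriv (γ ∘ τ) s, deriv (γ ∘ τ) s⟫) * u ^ 2
      = 3 * (u * a) + u ^ 3 * (3 * ⟪v, w2⟫ / ⟪v, v⟫) := by
    rw [einner, eself]
    generalize ⟪v, w2⟫ = A
    generalize hB : ⟪v, v⟫ = B at hvv ⊢
    field_simp
  unfold NormalCCEq
  rw [e3, e2p, smul_smul, ecoeff, add_smul,
    show (u ^ 3 * (3 * ⟪v, w2⟫ / ⟪v, v⟫)) • P w2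
      = u ^ 3 • ((3 * ⟪v, w2⟫ / ⟪v, v⟫) • P w2) from mul_smul _ _ _,
    add_right_inj, (smul_right_injective _ (pow_ne_zero 3 hu)).eq_iff]
  rw [hg2, hg3]
  exact Iff.rfl
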